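/- Let D be a category with an initial object 0 and colimits of ω-chains, and let E : D → D be a functor preserving colimits of ω-chains. Then the colimit μE of the ω-chain 0 → E(0) → E²(0) → ⋯ (starting from the unique map 0 → E(0)) carries an E-algebra structure E(μE) → μE that is an initial object in the category of E-algebras. (Adámek's theorem.) -/

import Mathlib

/-!
Adámek's theorem: if `D` has an initial object and colimits of ω-chains and
`E : D ⥤ D` preserves colimits of ω-chains, then the colimit of the chain
`0 → E 0 → E² 0 → ⋯` carries an `E`-algebra structure making it an initial
object of the category of `E`-algebras.
-/

open CategoryTheory Limits

universe v u

variable {D : Type u} [Category.{v} D] [HasInitial D] [HasColimitsOfShape ℕ D]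

/-- The objects `Eⁿ(0)` of Adámek's chain. -/
noncomputable def adamekObj (E : D ⥤ D) : ℕ → D :=
  fun n => Nat.rec (⊥_ D) (fun _ X => E.obj X) n

/-- The connecting maps `Eⁿ(0) ⟶ Eⁿ⁺¹(0)` of Adámek's chain, obtained by iterating
`E` on the unique map `0 ⟶ E 0`. -/
noncomputable def adamekMap (E : D ⥤ D) : ∀ n : ℕ, adamekObj E n ⟶ adamekObj E (n + 1)
  | 0 => initial.to _
  | n + 1 => E.map (adamekMap E n)

/-- Adámek's ω-chain `0 → E 0 → E² 0 → ⋯` as a functor `ℕ ⥤ D`. -/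
noncomputable def adamekChain (E : D ⥤ D) : ℕ ⥤ D := Functor.ofSequence (adamekMap E)

omit [HasColimitsOfShape ℕ D] in
lemma adamekChain_map_succ (E : D ⥤ D) (n : ℕ) :
    (adamekChain E).map (homOfLE (n.le_add_right 1)) = adamekMap E n :=
  Functor.ofSequence_map_homOfLE_succ _ n

/-- The legs `Eⁿ(0) ⟶ A` of the cocone induced by an algebra structure `ξ : E A ⟶ A`. -/
noncomputable def adamekF (E : D ⥤ D) {A : D} (ξ : E.obj A ⟶ A) :
    ∀ n : ℕ, adamekObj E n ⟶ A
  | 0 => initial.to A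
  | n + 1 => E.map (adamekF E ξ n) ≫ ξ

omit [HasColimitsOfShape ℕ D] in
lemma adamekF_w (E : D ⥤ D) {A : D} (ξ : E.obj A ⟶ A) (n : ℕ) :
    adamekMap E n ≫ adamekF E ξ (n + 1) = adamekF E ξ n := by
  induction n with
  | zero => exact initial.hom_ext _ _
  | succ n ih =>
    show E.map (adamekMap E n) ≫ E.map (adamekF E ξ (n + 1)) ≫ ξ = _
    rw [← Category.assoc, ← E.map_comp, ih]
    rfl

/-- The cocone on the Adámek chain induced by an algebra structure. -/
noncomputable def adamekCocone (E : D ⥤ D) {A : D} (ξ : E.obj A ⟶ A) :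
    Cocone (adamekChain E) where
  pt := A
  ι := NatTrans.ofSequence (F := adamekChain E) (G := (Functor.const ℕ).obj A)
    (fun n => adamekF E ξ n)
    (fun n => by
      simp [adamekChain_map_succ]
      exact (adamekF_w E ξ n).trans (Category.comp_id (adamekF E ξ n)).symm)

/-- The structure cocone: a cocone on `adamekChain E ⋙ E` with point `colimit (adamekChain E)`. -/
noncomputable def adamekStrCocone (E : D ⥤ D) : Cocone (adamekChain E ⋙ E) where
  pt := colimit (adamekChain E)
  ι := NatTrans.ofSequence (F := adamekChain E ⋙ E)
    (G := (Functor.const ℕ).obj (colimit (adamekChain E)))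
    (fun n => colimit.ι (adamekChain E) (n + 1))
    (fun n => by
      have h := colimit.w (adamekChain E) (homOfLE ((n + 1).le_add_right 1))
      rw [adamekChain_map_succ E (n + 1),
        show adamekMap E (n + 1) = E.map (adamekMap E n) from rfl] at h
      show E.map ((adamekChain E).map _) ≫ _ = _
      rw [adamekChain_map_succ E n]
      simp
      exact h.trans (Category.comp_id (colimit.ι (adamekChain E) (n + 1))).symm)

/-- The algebra structure on the colimit of Adámek's chain. -/
noncomputable def adamekStr (E : D ⥤ D) [PreservesColimitsOfShape ℕ E] :
    E.obj (colimit (adamekChain E)) ⟶ colimit (adamekChain E) :=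
  (preservesColimitIso E (adamekChain E)).hom ≫ colimit.desc _ (adamekStrCocone E)

lemma adamekStr_ι (E : D ⥤ D) [PreservesColimitsOfShape ℕ E] (n : ℕ) :
    E.map (colimit.ι (adamekChain E) n) ≫ adamekStr E = colimit.ι (adamekChain E) (n + 1) := by
  rw [adamekStr]
  erw [ι_preservesColimitIso_hom_assoc, colimit.ι_desc]
  rfl

/-- **Adámek's theorem.** The colimit `μE` of the ω-chain `0 → E(0) → E²(0) → ⋯`
carries an `E`-algebra structure `E(μE) ⟶ μE` which is an initial object in the
category of `E`-algebras. -/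
theorem adamek_initial_algebra (E : D ⥤ D) [PreservesColimitsOfShape ℕ E] :
    ∃ str : E.obj (colimit (adamekChain E)) ⟶ colimit (adamekChain E),
      Nonempty (IsInitial (Endofunctor.Algebra.mk (colimit (adamekChain E)) str)) := by
  have key : ∀ (A : Endofunctor.Algebra E) (g : colimit (adamekChain E) ⟶ A.a)
      (hg : E.map g ≫ A.str = adamekStr E ≫ g) (n : ℕ),
      colimit.ι (adamekChain E) n ≫ g = adamekF E A.str n := by
    intro A g hg n
    induction n with
    | zero => exact initial.hom_ext _ _
    | succ n ih =>
      rw [← adamekStr_ι E n]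
      erw [Category.assoc, ← hg, ← Category.assoc, ← E.map_comp, ih]
      rfl
  refine ⟨adamekStr E, ⟨IsInitial.ofUniqueHom
    (fun A => ⟨colimit.desc (adamekChain E) (adamekCocone E A.str), ?_⟩) ?_⟩⟩
  · -- algebra morphism condition
    rw [← cancel_epi (preservesColimitIso E (adamekChain E)).inv]
    apply colimit.hom_ext
    intro n
    dsimp only
    rw [ι_preservesColimitIso_inv_assoc, ι_preservesColimitIso_inv_assoc]
    erw [← Category.assoc _ (adamekStr E), adamekStr_ι E n, colimit.ι_desc,
      ← E.map_comp_assoc, colimit.ι_desc]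
    rfl
  · intro A m
    apply Endofunctor.Algebra.Hom.ext
    apply colimit.hom_ext
    intro n
    erw [colimit.ι_desc]
    rw [key A m.f m.h n]
    rfl
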